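/- For even n > 4, F_∞(M(n)) < 4 · F_∞(M(n−2)). Consequently, given F_∞(M(4)) = 9, for all even n > 4 we have F_∞(M(n)) < 9 · 2^{n−4}. -/

import Mathlib

/-- The perfect matching `M(n)` on vertices `Fin n` with edges
`(0,1), (2,3), …` (standing for `(1,2), (3,4), …`). -/
def MatchG (n : ℕ) : SimpleGraph (Fin n) where
  Adj u v := (u : ℕ) / 2 = (v : ℕ) / 2 ∧ u ≠ v
  symm := ⟨fun _ _ h => ⟨h.1.symm, h.2.symm⟩⟩
  loopless := ⟨fun _ h => h.2 rfl⟩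

/-- A permutation of the vertices `Fin n` with blanks among `c` positions. -/
def validPerm {n c : ℕ} (f : Fin c → Option (Fin n)) : Prop :=
  ∀ v : Fin n, ∃! i, f i = some v

/-- Two permutations-with-blanks are `M(n)`-different if at some position their
entries form a matching edge. -/
def mDiff {n c : ℕ} (f g : Fin c → Option (Fin n)) : Prop :=
  ∃ i v w, f i = some v ∧ g i = some w ∧ (MatchG n).Adj v w

/-- `F_∞(M(n))`: the maximum size of a family of pairwise `M(n)`-different
permutations of the vertices of `M(n)` with arbitrarily many blank spaces. -/
noncomputable def FinfM (n : ℕ) : ℕ :=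
  sSup {k | ∃ (c : ℕ) (S : Finset (Fin c → Option (Fin n))),
    (∀ f ∈ S, validPerm f) ∧
    (S : Set (Fin c → Option (Fin n))).Pairwise mDiff ∧ S.card = k}

def famSet (n : ℕ) : Set ℕ :=
  {k | ∃ (c : ℕ) (S : Finset (Fin c → Option (Fin n))),
    (∀ f ∈ S, validPerm f) ∧
    (S : Set (Fin c → Option (Fin n))).Pairwise mDiff ∧ S.card = k}

lemma finfM_eq (n : ℕ) : FinfM n = sSup (famSet n) := rfl

lemma one_mem_famSet (n : ℕ) : 1 ∈ famSet n := by
  refine ⟨n, {fun i => some i}, ?_, ?_, Finset.card_singleton _⟩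
  · intro f hf
    simp only [Finset.mem_singleton] at hf
    subst hf
    exact fun v => ⟨v, rfl, fun i h => Option.some_injective _ h⟩
  · simp [Set.Pairwise]

noncomputable def posOf {n c : ℕ} (d : Fin c) (f : Fin c → Option (Fin n)) (v : Fin n) : Fin c :=
  if h : ∃ i, f i = some v then h.choose else d

lemma posOf_spec {n c : ℕ} (d : Fin c) {f : Fin c → Option (Fin n)} (hf : validPerm f) (v : Fin n) :
    f (posOf d f v) = some v ∧ ∀ i, f i = some v → i = posOf d f v := by
  obtain ⟨j, hj, hu⟩ := hf v
  have hex : ∃ i, f i = some v := ⟨j, hj⟩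
  have h1 : f (posOf d f v) = some v := by rw [posOf, dif_pos hex]; exact hex.choose_spec
  exact ⟨h1, fun i hi => (hu i hi).trans (hu _ h1).symm⟩

lemma count_flip {c : ℕ} (a : Fin c) (x : Bool) (q : (Fin c → Bool) → Bool)
    (hq : ∀ χ, q (Function.update χ a (!(χ a))) = q χ) :
    (Finset.univ.filter (fun χ : Fin c → Bool => χ a = x ∧ q χ = true)).card
      = (Finset.univ.filter (fun χ : Fin c → Bool => χ a = !x ∧ q χ = true)).card := by
  apply Finset.card_bij' (fun χ _ => Function.update χ a (!(χ a)))
    (fun χ _ => Function.update χ a (!(χ a)))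
  · intro χ _
    simp [Function.update_idem]
  · intro χ _
    simp [Function.update_idem]
  · intro χ hχ
    simp only [Finset.mem_filter, Finset.mem_univ, true_and] at hχ ⊢
    rw [hq, Function.update_self]
    exact ⟨by rw [hχ.1], hχ.2⟩
  · intro χ hχ
    simp only [Finset.mem_filter, Finset.mem_univ, true_and] at hχ ⊢
    rw [hq, Function.update_self]
    exact ⟨by rw [hχ.1, Bool.not_not], hχ.2⟩

lemma count_quarter {c : ℕ} (a b : Fin c) (hab : a ≠ b) :
    4 * (Finset.univ.filter (fun χ : Fin c → Bool => χ a = true ∧ χ b = false)).card = 2 ^ c := by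
  classical
  have flipa : ∀ y : Bool,
      (Finset.univ.filter (fun χ : Fin c → Bool => χ a = true ∧ χ b = y)).card
        = (Finset.univ.filter (fun χ : Fin c → Bool => χ a = false ∧ χ b = y)).card := by
    intro y
    have := count_flip a true (fun χ => χ b == y) (by
      intro χ
      simp [Function.update_of_ne (Ne.symm hab)])
    simpa using this
  have flipb : ∀ x : Bool,
      (Finset.univ.filter (fun χ : Fin c → Bool => χ a = x ∧ χ b = true)).card
        = (Finset.univ.filter (fun χ : Fin c → Bool => χ a = x ∧ χ b = false)).card := by
    intro x
    have h0 := count_flip b true (fun χ => χ a == x) (by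
      intro χ
      simp [Function.update_of_ne hab])
    have h2 : ∀ y : Bool, (Finset.univ.filter (fun χ : Fin c → Bool => χ b = y ∧ χ a = x)).card
        = (Finset.univ.filter (fun χ : Fin c → Bool => χ a = x ∧ χ b = y)).card := by
      intro y
      congr 1
      apply Finset.filter_congr
      intro χ _
      constructor <;> exact fun h => ⟨h.2, h.1⟩
    rw [← h2 true, ← h2 false]
    simpa using h0
  have htot : (Finset.univ : Finset (Fin c → Bool)).card = 2 ^ c := by
    rw [Finset.card_univ, Fintype.card_fun]
    simp
  have hsum : ∑ p : Bool × Bool,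
      (Finset.univ.filter (fun χ : Fin c → Bool => (χ a, χ b) = p)).card = 2 ^ c := by
    rw [← htot]
    exact (Finset.card_eq_sum_card_fiberwise (fun χ _ => Finset.mem_univ ((χ a, χ b)))).symm
  have hconv : ∀ x y : Bool,
      (Finset.univ.filter (fun χ : Fin c → Bool => (χ a, χ b) = (x, y))).card
        = (Finset.univ.filter (fun χ : Fin c → Bool => χ a = x ∧ χ b = y)).card := by
    intro x y
    congr 1
    apply Finset.filter_congr
    intro χ _
    simp [Prod.ext_iff]
  simp only [Fintype.sum_prod_type, Fintype.sum_bool] at hsum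
  rw [hconv, hconv, hconv, hconv] at hsum
  have e1 := flipa true
  have e2 := flipa false
  have e3 := flipb true
  set k1 := (Finset.univ.filter (fun χ : Fin c → Bool => χ a = true ∧ χ b = true)).card
  set k2 := (Finset.univ.filter (fun χ : Fin c → Bool => χ a = true ∧ χ b = false)).card
  set k3 := (Finset.univ.filter (fun χ : Fin c → Bool => χ a = false ∧ χ b = true)).card
  set k4 := (Finset.univ.filter (fun χ : Fin c → Bool => χ a = false ∧ χ b = false)).card
  clear * - hsum e1 e2 e3
  clear_value k1 k2 k3 k4
  omega

lemma key_step (n : ℕ) (hn : 2 ≤ n) (hB : BddAbove (famSet (n - 2))) :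
    ∀ k ∈ famSet n, k < 4 * FinfM (n - 2) := by
  classical
  have hF1 : 1 ≤ FinfM (n - 2) := le_csSup hB (one_mem_famSet _)
  rintro k ⟨c, S, hv, hp, rfl⟩
  rcases Nat.eq_zero_or_pos S.card with h0 | hpos
  · rw [h0]; omega
  obtain ⟨f0, hf0⟩ := Finset.card_pos.mp hpos
  have hv0lt : 0 < n := by omega
  have hv1lt : 1 < n := by omega
  set v0 : Fin n := ⟨0, hv0lt⟩ with hv0def
  set v1 : Fin n := ⟨1, hv1lt⟩ with hv1def
  obtain ⟨i0, hi0, -⟩ := hv f0 hf0 v0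
  set A : (Fin c → Option (Fin n)) → Fin c := fun f => posOf i0 f v0 with hAdef
  set B : (Fin c → Option (Fin n)) → Fin c := fun f => posOf i0 f v1 with hBdef
  have hApos : ∀ f ∈ S, f (A f) = some v0 ∧ ∀ i, f i = some v0 → i = A f :=
    fun f hf => posOf_spec i0 (hv f hf) v0
  have hBpos : ∀ f ∈ S, f (B f) = some v1 ∧ ∀ i, f i = some v1 → i = B f :=
    fun f hf => posOf_spec i0 (hv f hf) v1
  have hAB : ∀ f ∈ S, A f ≠ B f := by
    intro f hf h
    have h1 := (hApos f hf).1
    have h2 := (hBpos f hf).1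
    rw [h] at h1
    rw [h1] at h2
    rw [hv0def, hv1def] at h2
    simp only [Option.some.injEq, Fin.mk.injEq] at h2
    omega
  set N : (Fin c → Bool) → ℕ :=
    fun χ => (S.filter (fun f => χ (A f) = true ∧ χ (B f) = false)).card with hNdef
  have hdouble : ∑ χ : Fin c → Bool, 4 * N χ = S.card * 2 ^ c := by
    have hNc : ∀ χ, N χ = ∑ f ∈ S, if (χ (A f) = true ∧ χ (B f) = false) then 1 else 0 :=
      fun χ => Finset.card_filter _ _
    calc ∑ χ : Fin c → Bool, 4 * N χ
        = 4 * ∑ χ : Fin c → Bool, ∑ f ∈ S,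
            (if (χ (A f) = true ∧ χ (B f) = false) then 1 else 0) := by
          rw [← Finset.mul_sum]
          congr 1
          exact Finset.sum_congr rfl (fun χ _ => hNc χ)
      _ = 4 * ∑ f ∈ S, ∑ χ : Fin c → Bool,
            (if (χ (A f) = true ∧ χ (B f) = false) then 1 else 0) := by
          rw [Finset.sum_comm]
      _ = ∑ f ∈ S, 4 * (Finset.univ.filter
            (fun χ : Fin c → Bool => χ (A f) = true ∧ χ (B f) = false)).card := by
          rw [Finset.mul_sum]
          exact Finset.sum_congr rfl fun f _ => by rw [Finset.card_filter]
      _ = ∑ f ∈ S, 2 ^ c := Finset.sum_congr rfl fun f hf => count_quarter _ _ (hAB f hf)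
      _ = S.card * 2 ^ c := by rw [Finset.sum_const, smul_eq_mul]
  have hχex : ∃ χ : Fin c → Bool, S.card < 4 * N χ := by
    by_contra hcon
    push_neg at hcon
    have htop : N (fun _ => true) = 0 := by
      rw [hNdef]
      simp
    have hmem : (fun _ : Fin c => true) ∈ (Finset.univ : Finset (Fin c → Bool)) :=
      Finset.mem_univ _
    have hsum2 : ∑ χ ∈ (Finset.univ : Finset (Fin c → Bool)).erase (fun _ => true), 4 * N χ
          + 4 * N (fun _ => true)
        = ∑ χ : Fin c → Bool, 4 * N χ := Finset.sum_erase_add _ _ hmem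
    have hle : ∑ χ ∈ (Finset.univ : Finset (Fin c → Bool)).erase (fun _ => true), 4 * N χ
        ≤ ∑ _χ ∈ (Finset.univ : Finset (Fin c → Bool)).erase (fun _ => true), S.card :=
      Finset.sum_le_sum (fun χ _ => hcon χ)
    rw [Finset.sum_const, smul_eq_mul, Finset.card_erase_of_mem hmem, Finset.card_univ,
      Fintype.card_fun, Fintype.card_bool, Fintype.card_fin] at hle
    rw [htop, Nat.mul_zero, Nat.add_zero, hdouble] at hsum2
    have hkey : S.card * 2 ^ c ≤ (2 ^ c - 1) * S.card := hsum2 ▸ hle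
    have h1le : 1 ≤ 2 ^ c := Nat.one_le_two_pow
    have hlt : (2 ^ c - 1) * S.card < 2 ^ c * S.card :=
      (Nat.mul_lt_mul_right hpos).mpr (by omega)
    rw [Nat.mul_comm (2 ^ c) S.card] at hlt
    exact absurd (lt_of_le_of_lt hkey hlt) (lt_irrefl _)
  obtain ⟨χ, hχgood⟩ := hχex
  set S' := S.filter (fun f => χ (A f) = true ∧ χ (B f) = false) with hS'def
  have hS'S : S' ⊆ S := Finset.filter_subset _ _
  have hNS' : N χ = S'.card := rfl
  have claim : ∀ f ∈ S', ∀ g ∈ S', f ≠ g → ∃ (i : Fin c) (v w : Fin n),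
      f i = some v ∧ g i = some w ∧ (v : ℕ) / 2 = (w : ℕ) / 2 ∧ (v : ℕ) ≠ (w : ℕ) ∧
      2 ≤ (v : ℕ) ∧ 2 ≤ (w : ℕ) := by
    intro f hf g hg hfg
    obtain ⟨i, v, w, hfi, hgi, hadj⟩ :=
      hp (Finset.mem_coe.mpr (hS'S hf)) (Finset.mem_coe.mpr (hS'S hg)) hfg
    have hdiv : (v : ℕ) / 2 = (w : ℕ) / 2 := (id hadj : (v : ℕ) / 2 = (w : ℕ) / 2 ∧ v ≠ w).1
    have hne : (v : ℕ) ≠ (w : ℕ) := fun e => (id hadj : (v : ℕ) / 2 = (w : ℕ) / 2 ∧ v ≠ w).2 (Fin.ext e)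
    by_cases h2 : 2 ≤ (v : ℕ)
    · exact ⟨i, v, w, hfi, hgi, hdiv, hne, h2, by omega⟩
    · exfalso
      have hw2 : (w : ℕ) < 2 := by omega
      have hχf := (Finset.mem_filter.mp hf).2
      have hχg := (Finset.mem_filter.mp hg).2
      rcases (by omega : (v : ℕ) = 0 ∨ (v : ℕ) = 1) with hv' | hv'
      · have hw' : (w : ℕ) = 1 := by omega
        have hvv : v = v0 := Fin.ext (by rw [hv', hv0def])
        have hww : w = v1 := Fin.ext (by rw [hw', hv1def])
        have hiA : i = A f := (hApos f (hS'S hf)).2 i (by rw [← hvv]; exact hfi)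
        have hiB : i = B g := (hBpos g (hS'S hg)).2 i (by rw [← hww]; exact hgi)
        have := hχf.1
        rw [← hiA] at this
        rw [hiB] at this
        rw [hχg.2] at this
        exact Bool.false_ne_true this
      · have hw' : (w : ℕ) = 0 := by omega
        have hvv : v = v1 := Fin.ext (by rw [hv', hv1def])
        have hww : w = v0 := Fin.ext (by rw [hw', hv0def])
        have hiB : i = B f := (hBpos f (hS'S hf)).2 i (by rw [← hvv]; exact hfi)
        have hiA : i = A g := (hApos g (hS'S hg)).2 i (by rw [← hww]; exact hgi)
        have := hχg.1
        rw [← hiA] at this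
        rw [hiB] at this
        rw [hχf.2] at this
        exact Bool.false_ne_true this
  set F : (Fin c → Option (Fin n)) → (Fin c → Option (Fin (n - 2))) := fun f i =>
    (f i).bind (fun v => if h : 2 ≤ (v : ℕ) then
      some ⟨(v : ℕ) - 2, by have := v.isLt; omega⟩ else none) with hFdef
  have hFiff : ∀ (f : Fin c → Option (Fin n)) (i : Fin c) (w : Fin (n - 2)),
      F f i = some w ↔ f i = some ⟨(w : ℕ) + 2, by have := w.isLt; omega⟩ := by
    intro f i w
    constructor
    · intro h
      simp only [hFdef] at h
      cases hfi : f i with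
      | none => rw [hfi] at h; simp at h
      | some u =>
        rw [hfi, Option.bind_some] at h
        split_ifs at h with h2
        rw [Option.some_inj] at h
        have hval : (u : ℕ) - 2 = (w : ℕ) := congrArg Fin.val h
        rw [Option.some_inj]
        apply Fin.ext
        show (u : ℕ) = (w : ℕ) + 2
        omega
    · intro h
      rw [hFdef]
      simp only [h, Option.bind_some]
      split_ifs with h2
      · rw [Option.some_inj]
        apply Fin.ext
        show (w : ℕ) + 2 - 2 = (w : ℕ)
        omega
      · exfalso
        apply h2
        show 2 ≤ (w : ℕ) + 2
        omega
  have hFvalid : ∀ f ∈ S, validPerm (F f) := by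
    intro f hf w
    obtain ⟨j, hj, hu⟩ := hv f hf ⟨(w : ℕ) + 2, by have := w.isLt; omega⟩
    exact ⟨j, (hFiff f j w).mpr hj, fun i hi => hu i ((hFiff f i w).mp hi)⟩
  have hFval : ∀ (f : Fin c → Option (Fin n)) (i : Fin c) (v : Fin n) (h2 : 2 ≤ (v : ℕ)),
      f i = some v →
      F f i = some ⟨(v : ℕ) - 2, by have := v.isLt; omega⟩ := by
    intro f i v h2 hfi
    refine (hFiff f i ⟨(v : ℕ) - 2, by have := v.isLt; omega⟩).mpr ?_
    rw [hfi]
    congr 1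
    apply Fin.ext
    show (v : ℕ) = (v : ℕ) - 2 + 2
    omega
  have hFinj : Set.InjOn F ↑S' := by
    intro f hf g hg hFfg
    by_contra hfg
    obtain ⟨i, v, w, hfi, hgi, hdiv, hvw, h2v, h2w⟩ :=
      claim f (Finset.mem_coe.mp hf) g (Finset.mem_coe.mp hg) hfg
    have h1 := hFval f i v h2v hfi
    have h2 := hFval g i w h2w hgi
    rw [hFfg] at h1
    rw [h1] at h2
    simp only [Option.some.injEq, Fin.mk.injEq] at h2
    omega
  have hpair : ((S'.image F : Finset (Fin c → Option (Fin (n - 2)))) :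
      Set (Fin c → Option (Fin (n - 2)))).Pairwise mDiff := by
    intro h1 h1m h2 h2m h12
    obtain ⟨f, hfS', rfl⟩ := Finset.mem_image.mp (Finset.mem_coe.mp h1m)
    obtain ⟨g, hgS', rfl⟩ := Finset.mem_image.mp (Finset.mem_coe.mp h2m)
    have hfg : f ≠ g := fun e => h12 (by rw [e])
    obtain ⟨i, v, w, hfi, hgi, hdiv, hvw, h2v, h2w⟩ := claim f hfS' g hgS' hfg
    refine ⟨i, ⟨(v : ℕ) - 2, by have := v.isLt; omega⟩, ⟨(w : ℕ) - 2, by have := w.isLt; omega⟩,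
      hFval f i v h2v hfi, hFval g i w h2w hgi, show _ ∧ _ from ⟨?_, ?_⟩⟩
    · simp only []
      omega
    · intro e
      rw [Fin.ext_iff] at e
      simp only [] at e
      omega
  have hmem2 : S'.card ∈ famSet (n - 2) := by
    refine ⟨c, S'.image F, ?_, hpair, Finset.card_image_of_injOn hFinj⟩
    intro h hm
    obtain ⟨f, hfS', rfl⟩ := Finset.mem_image.mp hm
    exact hFvalid f (hS'S hfS')
  have hle2 : S'.card ≤ FinfM (n - 2) := le_csSup hB hmem2
  rw [hNS'] at hχgood
  omega

lemma famSet_nonempty (n : ℕ) : (famSet n).Nonempty := ⟨1, one_mem_famSet n⟩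

lemma step (n : ℕ) (hn : 2 ≤ n) (hB : BddAbove (famSet (n - 2))) :
    BddAbove (famSet n) ∧ FinfM n < 4 * FinfM (n - 2) := by
  have h := key_step n hn hB
  have hBn : BddAbove (famSet n) := ⟨4 * FinfM (n - 2), fun k hk => (h k hk).le⟩
  exact ⟨hBn, h _ (Nat.sSup_mem (famSet_nonempty n) hBn)⟩

lemma base_bdd (h9 : FinfM 4 = 9) : BddAbove (famSet 4) := by
  by_contra h
  rw [finfM_eq, csSup_of_not_bddAbove h, csSup_empty] at h9
  simp at h9

lemma main_ind (h9 : FinfM 4 = 9) :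
    ∀ t : ℕ, BddAbove (famSet (4 + 2 * t)) ∧ FinfM (4 + 2 * t) ≤ 9 * 4 ^ t := by
  intro t
  induction t with
  | zero => exact ⟨base_bdd h9, by simpa using h9.le⟩
  | succ t ih =>
    have heq : (4 + 2 * (t + 1)) - 2 = 4 + 2 * t := by omega
    have hs := step (4 + 2 * (t + 1)) (by omega) (by rw [heq]; exact ih.1)
    refine ⟨hs.1, ?_⟩
    have h2 := hs.2
    rw [heq] at h2
    have hlt : FinfM (4 + 2 * (t + 1)) < 4 * (9 * 4 ^ t) :=
      lt_of_lt_of_le h2 (Nat.mul_le_mul le_rfl ih.2)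
    calc FinfM (4 + 2 * (t + 1)) ≤ 4 * (9 * 4 ^ t) := hlt.le
      _ = 9 * 4 ^ (t + 1) := by ring

theorem stmt17 (n : ℕ) (hn : Even n) (h4 : 4 < n) (h9 : FinfM 4 = 9) :
    FinfM n < 4 * FinfM (n - 2) ∧ FinfM n < 9 * 2 ^ (n - 4) := by
  obtain ⟨r, hr⟩ := hn
  have hr3 : 3 ≤ r := by omega
  set t := r - 3 with ht
  have hnt : n = 4 + 2 * (t + 1) := by omega
  have ih := main_ind h9 t
  have heq : n - 2 = 4 + 2 * t := by omega
  have hs := step n (by omega) (by rw [heq]; exact ih.1)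
  refine ⟨hs.2, ?_⟩
  have h2 := hs.2
  rw [heq] at h2
  have hlt : FinfM n < 4 * (9 * 4 ^ t) :=
    lt_of_lt_of_le h2 (Nat.mul_le_mul le_rfl ih.2)
  have hpow : 9 * 2 ^ (n - 4) = 4 * (9 * 4 ^ t) := by
    have hn4 : n - 4 = 2 * (t + 1) := by omega
    rw [hn4, pow_mul]
    norm_num
    ring
  rw [hpow]
  exact hlt
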